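/- Fix an integer K ≥ 1, γ > 0, and σ > 0, and let G_l be as defined. Then for any reals ξ₁ ≥ ξ₂ ≥ … ≥ ξ_K, the determinant of the K×K matrix [G_l(ξ_j)] (rows indexed by l = 0, …, K−1, columns by j = 1, …, K) equals ( G₀(ξ₁)·⋯·G₀(ξ_K) / ( σ^{K(K−1)} (e^γ − 1)^{K(K−1)/2} ) ) · ∏_{1 ≤ j < i ≤ K} (ξ_i − ξ_j). -/

import Mathlib

open MeasureTheory Filter Set Complex Real Polynomial
open scoped Topology FourierTransform

/-- `G_l(ξ) = ((e^γ − 1)/(2π)) ∫_ℝ exp(−i t ξ (e^γ − 1) − t² σ² (e^γ − 1)²/2) (i t)^l dt`. -/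
noncomputable def Gfun (γ σ : ℝ) (l : ℕ) (ξ : ℝ) : ℂ :=
  (((Real.exp γ - 1)/(2*Real.pi) : ℝ) : ℂ) *
    ∫ t : ℝ,
      Complex.exp (-Complex.I * ((t*ξ*(Real.exp γ - 1) : ℝ) : ℂ)
          - ((t^2*σ^2*(Real.exp γ - 1)^2/2 : ℝ) : ℂ)) *
        (Complex.I * (t : ℂ))^l

noncomputable def hermiteLike (c : ℝ) : ℕ → Polynomial ℝ
  | 0 => 1
  | (l+1) => X * hermiteLike c l - C c * derivative (hermiteLike c l)

theorem hermiteLike_monic_natDegree (c : ℝ) :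
    ∀ l : ℕ, (hermiteLike c l).Monic ∧ (hermiteLike c l).natDegree = l := by
  intro l
  induction l with
  | zero => exact ⟨monic_one, natDegree_one⟩
  | succ n ih =>
    obtain ⟨hm, hd⟩ := ih
    have hne : hermiteLike c n ≠ 0 := hm.ne_zero
    have hXm : (X * hermiteLike c n).Monic := (monic_X).mul hm
    have hdX : (X * hermiteLike c n).natDegree = n + 1 := by
      rw [natDegree_X_mul hne, hd]
    have hndlt : (C c * derivative (hermiteLike c n)).natDegree < n + 1 := by
      calc (C c * derivative (hermiteLike c n)).natDegree
          ≤ (derivative (hermiteLike c n)).natDegree := natDegree_mul_le.trans (by simp)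
        _ ≤ n - 1 := by simpa [hd] using natDegree_derivative_le (hermiteLike c n)
        _ < n + 1 := by omega
    have hlt : (C c * derivative (hermiteLike c n)).degree < (X * hermiteLike c n).degree := by
      rw [degree_eq_natDegree hXm.ne_zero, hdX]
      calc (C c * derivative (hermiteLike c n)).degree
          ≤ ((C c * derivative (hermiteLike c n)).natDegree : WithBot ℕ) := degree_le_natDegree
        _ < ((n+1 : ℕ) : WithBot ℕ) := by exact_mod_cast hndlt
    have hmon : (hermiteLike c (n+1)).Monic := hXm.sub_of_left hlt
    refine ⟨hmon, ?_⟩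
    show (X * hermiteLike c n - C c * derivative (hermiteLike c n)).natDegree = n + 1
    rw [natDegree_sub_eq_left_of_natDegree_lt (hdX ▸ hndlt), hdX]

noncomputable def gker (σ a : ℝ) (l : ℕ) (t : ℝ) : ℂ :=
  Complex.exp (-((t^2*σ^2*a^2/2 : ℝ) : ℂ)) * (Complex.I * (t : ℂ))^l

lemma gfun_eq_fourier (γ σ : ℝ) (l : ℕ) (ξ : ℝ) :
    Gfun γ σ l ξ = (((Real.exp γ - 1)/(2*Real.pi) : ℝ) : ℂ) *
      𝓕 (gker σ (Real.exp γ - 1) l) ((Real.exp γ - 1) * ξ / (2*Real.pi)) := by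
  rw [Gfun, Real.fourier_real_eq]
  congr 1
  refine integral_congr_ae (Filter.Eventually.of_forall fun t => ?_)
  show _ = 𝐞 (-(t * ((Real.exp γ - 1) * ξ / (2*Real.pi)))) • gker σ (Real.exp γ - 1) l t
  rw [Circle.smul_def, Real.fourierChar_apply, gker, smul_eq_mul, ← mul_assoc, ← Complex.exp_add]
  simp only []
  congr 2
  have hπ : (Real.pi : ℝ) ≠ 0 := Real.pi_ne_zero
  push_cast
  field_simp [Complex.ofReal_ne_zero.mpr hπ]
  ring

lemma norm_gker (σ a : ℝ) (l : ℕ) (t : ℝ) :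
    ‖gker σ a l t‖ = |t|^l * Real.exp (-(t^2*σ^2*a^2/2)) := by
  rw [gker, norm_mul, norm_pow, norm_mul, Complex.norm_I, one_mul, Complex.norm_real,
    Real.norm_eq_abs]
  rw [show (-((t^2*σ^2*a^2/2 : ℝ) : ℂ)) = ((-(t^2*σ^2*a^2/2) : ℝ) : ℂ) by push_cast; ring]
  rw [Complex.norm_exp, Complex.ofReal_re]
  ring

lemma integrable_gker {σ a : ℝ} (hσ : 0 < σ) (ha : 0 < a) (l : ℕ) :
    Integrable (gker σ a l) := by
  have hb : 0 < σ^2*a^2/2 := by positivity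
  have h0 : Integrable (fun t : ℝ => t^l * Real.exp (-(σ^2*a^2/2) * t^2)) := by
    have := integrable_rpow_mul_exp_neg_mul_sq hb (s := (l : ℝ))
      (by exact lt_of_lt_of_le (by norm_num) (Nat.cast_nonneg l))
    simpa [Real.rpow_natCast] using this
  refine Integrable.mono' h0.norm ?_ ?_
  · apply Continuous.aestronglyMeasurable
    unfold gker; fun_prop
  · filter_upwards with t
    have heq : ‖t ^ l * Real.exp (-(σ ^ 2 * a ^ 2 / 2) * t ^ 2)‖
        = |t|^l * Real.exp (-(t^2*σ^2*a^2/2)) := by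
      rw [norm_mul, Real.norm_eq_abs, Real.norm_eq_abs, _root_.abs_pow,
        abs_of_pos (Real.exp_pos _)]
      congr 1
      ring
    rw [norm_gker, heq]

lemma hasDerivAt_gfun {γ σ : ℝ} (hγ : 0 < γ) (hσ : 0 < σ) (l : ℕ) (ξ : ℝ) :
    HasDerivAt (Gfun γ σ l) (-(Real.exp γ - 1) * Gfun γ σ (l+1) ξ) ξ := by
  set a := Real.exp γ - 1 with ha'
  have ha : 0 < a := sub_pos.mpr (Real.one_lt_exp_iff.mpr hγ)
  have hπ : (Real.pi : ℝ) ≠ 0 := Real.pi_ne_zero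
  have hf := integrable_gker hσ ha l
  have hsucc : ∀ t : ℝ, gker σ a (l+1) t = (Complex.I * t) * gker σ a l t := by
    intro t; rw [gker, gker, pow_succ]; ring
  have hf' : Integrable (fun t : ℝ => t • gker σ a l t) := by
    refine ((integrable_gker hσ ha (l+1)).const_mul (-Complex.I)).congr
      (Filter.Eventually.of_forall fun t => ?_)
    show -Complex.I * gker σ a (l+1) t = t • gker σ a l t
    rw [hsucc t, Complex.real_smul, ← mul_assoc, ← mul_assoc, neg_mul, Complex.I_mul_I]
    simp
  have key := Real.hasDerivAt_fourier hf hf' (a*ξ/(2*Real.pi))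
  have hinner : HasDerivAt (fun ξ : ℝ => a*ξ/(2*Real.pi)) (a/(2*Real.pi)) ξ := by
    simpa using ((hasDerivAt_id ξ).const_mul a).div_const (2*Real.pi)
  have hcomp := key.scomp_of_eq (hh := hinner) (hy := rfl)
  have H := hcomp.const_mul (((a/(2*Real.pi) : ℝ) : ℂ))
  have hfun : (fun ξ : ℝ => ((a/(2*Real.pi) : ℝ) : ℂ) *
      ((𝓕 (gker σ a l)) ∘ (fun ξ : ℝ => a*ξ/(2*Real.pi))) ξ) = Gfun γ σ l := by
    funext x
    rw [Function.comp_apply, gfun_eq_fourier]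
  rw [hfun] at H
  refine H.congr_deriv (Eq.symm ?_)
  -- value equality
  have hFT : 𝓕 (fun t : ℝ => (-2 * Real.pi * Complex.I * t) • gker σ a l t) (a*ξ/(2*Real.pi))
      = ((-2 * Real.pi : ℝ) : ℂ) * 𝓕 (gker σ a (l+1)) (a*ξ/(2*Real.pi)) := by
    rw [Real.fourier_real_eq, Real.fourier_real_eq, ← integral_const_mul]
    refine integral_congr_ae (Filter.Eventually.of_forall fun t => ?_)
    simp only [Circle.smul_def, smul_eq_mul]
    rw [hsucc t]
    push_cast
    ring
  rw [hFT, gfun_eq_fourier, Complex.real_smul]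
  simp only [ha']
  push_cast
  field_simp [Complex.ofReal_ne_zero.mpr hπ]

lemma gfun_zero_eq {γ σ : ℝ} (hγ : 0 < γ) (hσ : 0 < σ) (ξ : ℝ) :
    Gfun γ σ 0 ξ = ((((Real.exp γ - 1)/(2*Real.pi) : ℝ) : ℂ) *
      ((Real.pi : ℂ) / ((σ^2*(Real.exp γ-1)^2/2 : ℝ) : ℂ))^((1:ℂ)/2)) *
      Complex.exp (((-(ξ^2/(2*σ^2)) : ℝ) : ℂ)) := by
  have ha : 0 < Real.exp γ - 1 := sub_pos.mpr (Real.one_lt_exp_iff.mpr hγ)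
  have hb : ((-(σ^2*(Real.exp γ-1)^2/2) : ℝ) : ℂ).re < 0 := by
    rw [Complex.ofReal_re]
    nlinarith [sq_nonneg σ, sq_nonneg (Real.exp γ - 1), mul_pos (pow_pos hσ 2) (pow_pos ha 2)]
  have key := integral_cexp_quadratic hb (-Complex.I * (Real.exp γ - 1) * ξ) 0
  rw [Gfun]
  have hint : (∫ t : ℝ,
      Complex.exp (-Complex.I * ((t*ξ*(Real.exp γ - 1) : ℝ) : ℂ)
          - ((t^2*σ^2*(Real.exp γ - 1)^2/2 : ℝ) : ℂ)) * (Complex.I * (t : ℂ))^0)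
      = ∫ t : ℝ, Complex.exp (((-(σ^2*(Real.exp γ-1)^2/2) : ℝ) : ℂ) * (t:ℂ)^2
          + (-Complex.I * (Real.exp γ - 1) * ξ) * (t:ℂ) + 0) := by
    refine integral_congr_ae (Filter.Eventually.of_forall fun t => ?_)
    show Complex.exp _ * _ = Complex.exp _
    rw [pow_zero, mul_one]
    congr 1
    push_cast
    ring
  rw [hint, key]
  have hbase : -((-(σ^2*(Real.exp γ-1)^2/2) : ℝ) : ℂ) = ((σ^2*(Real.exp γ-1)^2/2 : ℝ) : ℂ) := by
    push_cast; ring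
  rw [← mul_assoc, hbase]
  congr 1
  have hσcc : (σ : ℂ) ≠ 0 := Complex.ofReal_ne_zero.mpr hσ.ne'
  have hacc : (Complex.exp (γ:ℂ) - 1) ≠ 0 := by
    rw [← Complex.ofReal_exp, ← Complex.ofReal_one, ← Complex.ofReal_sub]
    exact Complex.ofReal_ne_zero.mpr ha.ne'
  congr 1
  rw [zero_sub]
  have hc2 : (-Complex.I * ((Real.exp γ : ℂ) - 1) * (ξ:ℂ))^2
      = -(((Real.exp γ : ℂ)-1)^2*(ξ:ℂ)^2) := by
    rw [show (-Complex.I * ((Real.exp γ:ℂ)-1) * (ξ:ℂ))^2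
      = Complex.I^2 * ((((Real.exp γ:ℂ))-1)^2*(ξ:ℂ)^2) by ring, Complex.I_sq]
    ring
  rw [hc2]
  push_cast
  field_simp
  ring

lemma gfun_formula {γ σ : ℝ} (hγ : 0 < γ) (hσ : 0 < σ) (l : ℕ) (ξ : ℝ) :
    Gfun γ σ l ξ = Gfun γ σ 0 ξ * (((1/((Real.exp γ - 1)*σ^2))^l : ℝ) : ℂ) *
      (((hermiteLike (σ^2) l).eval ξ : ℝ) : ℂ) := by
  induction l generalizing ξ with
  | zero => simp [hermiteLike]
  | succ l ih =>
    have ha : 0 < Real.exp γ - 1 := sub_pos.mpr (Real.one_lt_exp_iff.mpr hγ)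
    have hσcc : (σ : ℂ) ≠ 0 := Complex.ofReal_ne_zero.mpr hσ.ne'
    have hacc : ((Real.exp γ - 1 : ℝ) : ℂ) ≠ 0 := Complex.ofReal_ne_zero.mpr ha.ne'
    set C : ℂ := ((((Real.exp γ - 1)/(2*Real.pi) : ℝ) : ℂ) *
      ((Real.pi : ℂ) / ((σ^2*(Real.exp γ-1)^2/2 : ℝ) : ℂ))^((1:ℂ)/2)) with hC
    set E : ℝ → ℂ := fun x => Complex.exp (((-(x^2/(2*σ^2)) : ℝ) : ℂ)) with hE
    have hEderiv : ∀ x : ℝ, HasDerivAt E (((-(x/σ^2) : ℝ) : ℂ) * E x) x := by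
      intro x
      have hu : HasDerivAt (fun x : ℝ => -(x^2/(2*σ^2))) (-(x/σ^2)) x := by
        have := ((hasDerivAt_pow 2 x).div_const (2*σ^2)).neg
        refine this.congr_deriv (Eq.symm ?_)
        field_simp
        ring
      have := hu.ofReal_comp.cexp
      convert this using 1
      ring
    have h1 := hasDerivAt_gfun hγ hσ l ξ
    have hfun : Gfun γ σ l = fun x : ℝ =>
        (C * E x) * ((((1/((Real.exp γ - 1)*σ^2))^l : ℝ) : ℂ) *
          (((hermiteLike (σ^2) l).eval x : ℝ) : ℂ)) := by
      funext x
      rw [ih x, gfun_zero_eq hγ hσ x]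
      ring
    have hpoly : HasDerivAt (fun x : ℝ => (((hermiteLike (σ^2) l).eval x : ℝ) : ℂ))
        ((((hermiteLike (σ^2) l).derivative.eval ξ : ℝ) : ℂ)) ξ :=
      (Polynomial.hasDerivAt (hermiteLike (σ^2) l) ξ).ofReal_comp
    have h2 : HasDerivAt (Gfun γ σ l)
        (((((-(ξ/σ^2) : ℝ) : ℂ) * E ξ) * C) *
            ((((1/((Real.exp γ - 1)*σ^2))^l : ℝ) : ℂ) *
              (((hermiteLike (σ^2) l).eval ξ : ℝ) : ℂ))
          + (C * E ξ) * ((((1/((Real.exp γ - 1)*σ^2))^l : ℝ) : ℂ) *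
              (((hermiteLike (σ^2) l).derivative.eval ξ : ℝ) : ℂ))) ξ := by
      rw [hfun]
      have hCE : HasDerivAt (fun x : ℝ => C * E x) ((((-(ξ/σ^2) : ℝ) : ℂ) * E ξ) * C) ξ := by
        have := (hEderiv ξ).const_mul C
        refine this.congr_deriv (Eq.symm ?_)
        ring
      have hrest : HasDerivAt (fun x : ℝ =>
          (((1/((Real.exp γ - 1)*σ^2))^l : ℝ) : ℂ) * (((hermiteLike (σ^2) l).eval x : ℝ) : ℂ))
          ((((1/((Real.exp γ - 1)*σ^2))^l : ℝ) : ℂ) *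
            (((hermiteLike (σ^2) l).derivative.eval ξ : ℝ) : ℂ)) ξ := hpoly.const_mul _
      exact hCE.mul hrest
    have huniq := h1.unique h2
    have hne : (-((Real.exp γ - 1 : ℝ) : ℂ)) ≠ 0 :=
      neg_ne_zero.mpr hacc
    refine mul_right_cancel₀ hne ?_
    rw [show Gfun γ σ (l+1) ξ * (-((Real.exp γ - 1 : ℝ) : ℂ))
        = -((Real.exp γ : ℂ) - 1) * Gfun γ σ (l+1) ξ by push_cast; ring]
    rw [huniq, gfun_zero_eq hγ hσ, ← hC]
    simp only [hE]
    rw [show (hermiteLike (σ^2) (l+1)) = X * hermiteLike (σ^2) l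
      - Polynomial.C (σ^2) * derivative (hermiteLike (σ^2) l) from rfl]
    rw [Polynomial.eval_sub, Polynomial.eval_mul, Polynomial.eval_mul, Polynomial.eval_X,
      Polynomial.eval_C]
    have hreal : (-(ξ/σ^2)) * ((1/((Real.exp γ - 1)*σ^2))^l * ((hermiteLike (σ^2) l).eval ξ))
          + ((1/((Real.exp γ - 1)*σ^2))^l * ((Polynomial.derivative (hermiteLike (σ^2) l)).eval ξ))
        = ((1/((Real.exp γ - 1)*σ^2))^(l+1)
            * (ξ * (hermiteLike (σ^2) l).eval ξ
                - σ^2 * ((Polynomial.derivative (hermiteLike (σ^2) l)).eval ξ)))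
          * (-(Real.exp γ - 1)) := by
      rw [pow_succ]
      have hne2 : (Real.exp γ - 1) * σ^2 ≠ 0 := mul_ne_zero ha.ne' (pow_ne_zero 2 hσ.ne')
      have hu1 : 1/((Real.exp γ - 1)*σ^2) * (Real.exp γ - 1) = 1/σ^2 := by
        field_simp
      have hu2 : 1/((Real.exp γ - 1)*σ^2) * (Real.exp γ - 1) * σ^2 = 1 := by
        field_simp
      have key : ∀ P D : ℝ, (-(ξ/σ^2)) * ((1/((Real.exp γ - 1)*σ^2))^l * P)
          + (1/((Real.exp γ - 1)*σ^2))^l * D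
          = (1/((Real.exp γ - 1)*σ^2))^l * (1/((Real.exp γ - 1)*σ^2)) * (ξ * P - σ^2 * D)
            * (-(Real.exp γ - 1)) := by
        intro P D
        linear_combination ((1/((Real.exp γ - 1)*σ^2))^l * ξ * P) * hu1
          - ((1/((Real.exp γ - 1)*σ^2))^l * D) * hu2
      exact key _ _
    have hrealC := congrArg (fun r : ℝ => (r : ℂ)) hreal
    push_cast at hrealC
    push_cast
    linear_combination (C * Complex.exp (-((ξ:ℂ)^2/(2*(σ:ℂ)^2)))) * hrealC

lemma prod_filter_lt {M : Type*} [CommMonoid M] {K : ℕ} (f : Fin K → Fin K → M) :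
    ∏ p ∈ Finset.univ.filter (fun p : Fin K × Fin K => p.1 < p.2), f p.1 p.2
      = ∏ i : Fin K, ∏ j ∈ Finset.Ioi i, f i j := by
  rw [Finset.prod_filter, ← Finset.univ_product_univ, Finset.prod_product]
  refine Finset.prod_congr rfl fun i _ => ?_
  rw [← Finset.prod_filter]
  exact Finset.prod_congr (by ext j; simp) fun j _ => rfl

/-- for `ξ₁ ≥ … ≥ ξ_K`,
`det[G_l(ξ_j)]_{0≤l≤K−1, 1≤j≤K} = (∏_j G₀(ξ_j)) / (σ^{K(K−1)} (e^γ−1)^{K(K−1)/2}) ·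
∏_{j<i} (ξ_i − ξ_j)`. -/
theorem det_G_matrix (K : ℕ) (hK : 1 ≤ K) (γ σ : ℝ) (hγ : 0 < γ) (hσ : 0 < σ)
    (ξ : Fin K → ℝ) (hξ : ∀ i j : Fin K, i ≤ j → ξ j ≤ ξ i) :
    Matrix.det (Matrix.of fun l j : Fin K => Gfun γ σ (l : ℕ) (ξ j)) =
      ((∏ j, Gfun γ σ 0 (ξ j)) /
          (((σ^(K*(K-1)) * (Real.exp γ - 1)^(K*(K-1)/2) : ℝ)) : ℂ)) *
        ∏ p ∈ Finset.univ.filter (fun p : Fin K × Fin K => p.1 < p.2),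
          ((ξ p.2 - ξ p.1 : ℝ) : ℂ) := by
  classical
  have ha : 0 < Real.exp γ - 1 := sub_pos.mpr (Real.one_lt_exp_iff.mpr hγ)
  set pC : Fin K → Polynomial ℂ :=
    fun l => (hermiteLike (σ^2) (l:ℕ)).map (algebraMap ℝ ℂ) with hpC
  set B : Matrix (Fin K) (Fin K) ℂ :=
    Matrix.of (fun l j : Fin K => (((hermiteLike (σ^2) (l:ℕ)).eval (ξ j) : ℝ) : ℂ)) with hB
  have h1 : (Matrix.of fun l j : Fin K => Gfun γ σ (l : ℕ) (ξ j))
      = Matrix.of (fun l j : Fin K => (fun j => Gfun γ σ 0 (ξ j)) j *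
          (Matrix.of (fun l j : Fin K => (fun l : Fin K =>
              (((1/((Real.exp γ - 1)*σ^2))^(l:ℕ) : ℝ) : ℂ)) l * B l j)) l j) := by
    ext l j
    simp only [Matrix.of_apply, hB]
    rw [gfun_formula hγ hσ, mul_assoc]
  rw [h1, Matrix.det_mul_row, Matrix.det_mul_column]
  have hmon : ∀ i : Fin K, (pC i).Monic :=
    fun i => ((hermiteLike_monic_natDegree (σ^2) (i:ℕ)).1).map _
  have hdeg : ∀ i : Fin K, (pC i).natDegree = (i : ℕ) := by
    intro i
    rw [hpC]
    rw [((hermiteLike_monic_natDegree (σ^2) (i:ℕ)).1).natDegree_map]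
    exact (hermiteLike_monic_natDegree (σ^2) (i:ℕ)).2
  have hdetB : B.det = ∏ p ∈ Finset.univ.filter (fun p : Fin K × Fin K => p.1 < p.2),
      (((ξ p.2 : ℝ) : ℂ) - ((ξ p.1 : ℝ) : ℂ)) := by
    have hBt : B = Matrix.transpose (Matrix.of (fun i j : Fin K => (pC j).eval ((ξ i : ℝ) : ℂ))) := by
      ext l j
      simp only [Matrix.transpose_apply, Matrix.of_apply, hB, hpC]
      rw [Polynomial.eval_map, show ((ξ j : ℝ) : ℂ) = algebraMap ℝ ℂ (ξ j) from rfl,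
        Polynomial.eval₂_at_apply]
      rfl
    rw [hBt, Matrix.det_transpose,
      ← Matrix.det_eval_matrixOfPolynomials_eq_det_vandermonde
        (fun i : Fin K => ((ξ i : ℝ) : ℂ)) pC hdeg hmon,
      Matrix.det_vandermonde, ← prod_filter_lt (fun i j => ((ξ j : ℝ) : ℂ) - ((ξ i : ℝ) : ℂ))]
  rw [hdetB]
  have heven : 2 * (K*(K-1)/2) = K*(K-1) := by
    have h2 : Even ((K-1) * K) := by
      have := Nat.even_mul_succ_self (K-1)
      rwa [Nat.sub_add_cancel hK] at this
    obtain ⟨c, hc⟩ := h2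
    have : K * (K - 1) = c + c := by rw [mul_comm]; exact hc
    omega
  have hpowreal : ((Real.exp γ - 1)*σ^2)^(K*(K-1)/2)
      = σ^(K*(K-1)) * (Real.exp γ - 1)^(K*(K-1)/2) := by
    rw [mul_pow, ← pow_mul, heven, mul_comm]
  have hprodc : (∏ l : Fin K, (((1/((Real.exp γ - 1)*σ^2))^(l:ℕ) : ℝ) : ℂ))
      = (((σ^(K*(K-1)) * (Real.exp γ - 1)^(K*(K-1)/2) : ℝ)) : ℂ)⁻¹ := by
    rw [← Complex.ofReal_prod, Finset.prod_pow_eq_pow_sum]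
    rw [show (∑ l : Fin K, (l:ℕ)) = K*(K-1)/2 from ?_]
    · rw [one_div, inv_pow, hpowreal, Complex.ofReal_inv]
    · rw [Fin.sum_univ_eq_sum_range (fun i => i) K, Finset.sum_range_id]
  rw [hprodc, div_eq_mul_inv]
  push_cast
  ring
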